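/- Under the similarity transformation S_e, the edge Laplacian is block-upper-triangularized: S_e^{-1} L_e S_e = [[ L̂_e , E_T^T E_⊙^w Θ ], [0, 0]], where L̂_e = E_T^T E_⊙^w R^T is the essential edge Laplacian. -/

import Mathlib

open Matrix

lemma aux_isUnit_RRT
    (N L : ℕ) (hN : 0 < N) (hNL : N - 1 ≤ L)
    (E : Matrix (Fin N) (Fin L) ℝ)
    (ET : Matrix (Fin N) (Fin (N - 1)) ℝ)
    (R : Matrix (Fin (N - 1)) (Fin L) ℝ) (hER : E = ET * R)
    (Θ : Matrix (Fin L) (Fin (L - (N - 1))) ℝ)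
    (hΘspan : ∀ y : Fin L → ℝ, E.mulVec y = 0 → ∃ c, Θ.mulVec c = y) :
    IsUnit (R * Rᵀ) := by
  -- ker E.mulVecLin ≤ range Θ.mulVecLin
  have hker : LinearMap.ker E.mulVecLin ≤ LinearMap.range Θ.mulVecLin := by
    intro y hy
    obtain ⟨c, hc⟩ := hΘspan y hy
    exact ⟨c, hc⟩
  have hkerle : Module.finrank ℝ (LinearMap.ker E.mulVecLin) ≤ L - (N - 1) := by
    calc Module.finrank ℝ (LinearMap.ker E.mulVecLin)
        ≤ Module.finrank ℝ (LinearMap.range Θ.mulVecLin) :=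
          Submodule.finrank_mono hker
      _ = Θ.rank := rfl
      _ ≤ L - (N - 1) := by
          simpa using Θ.rank_le_width
  have hrn : E.rank + Module.finrank ℝ (LinearMap.ker E.mulVecLin) = L := by
    have := LinearMap.finrank_range_add_finrank_ker E.mulVecLin
    simp only [Module.finrank_fin_fun] at this
    exact this
  have hErank : N - 1 ≤ E.rank := by omega
  have hRrank : R.rank = N - 1 := by
    have h1 : R.rank ≤ N - 1 := R.rank_le_height
    have h2 : E.rank ≤ R.rank := hER ▸ Matrix.rank_mul_le_right ET R
    omega
  have hfull : (R * Rᵀ).rank = N - 1 := by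
    rw [Matrix.rank_self_mul_transpose]; exact hRrank
  -- full-rank square matrix is a unit
  rw [← Matrix.mulVec_surjective_iff_isUnit]
  have : LinearMap.range (R * Rᵀ).mulVecLin = ⊤ := by
    apply Submodule.eq_top_of_finrank_eq
    rw [show Module.finrank ℝ (LinearMap.range (R * Rᵀ).mulVecLin) = (R * Rᵀ).rank from rfl,
      hfull]
    simp
  intro v
  have := this ▸ Submodule.mem_top (R := ℝ) (x := v)
  obtain ⟨w, hw⟩ := this
  exact ⟨w, hw⟩

/-- Under the similarity transformation `S_e = [Rᵀ, Θ]` (with inverse rows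
`(RRᵀ)⁻¹R` and `Θᵀ`), the edge Laplacian `L_e = Eᵀ E_⊙^w` is block-upper-triangularized:
`S_e⁻¹ L_e S_e = [[L̂_e , E_Tᵀ E_⊙^w Θ], [0, 0]]`, where `L̂_e = E_Tᵀ E_⊙^w Rᵀ` is the
essential edge Laplacian. -/
theorem edge_laplacian_block_triangularization
    (N L : ℕ) (hN : 0 < N) (hNL : N - 1 ≤ L)
    (E Eow : Matrix (Fin N) (Fin L) ℝ)
    (ET : Matrix (Fin N) (Fin (N - 1)) ℝ) (hETrank : ET.rank = N - 1)
    (R : Matrix (Fin (N - 1)) (Fin L) ℝ) (hER : E = ET * R)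
    (Θ : Matrix (Fin L) (Fin (L - (N - 1))) ℝ)
    (hΘorth : Θᵀ * Θ = 1) (hΘflow : E * Θ = 0)
    (hΘspan : ∀ y : Fin L → ℝ, E.mulVec y = 0 → ∃ c, Θ.mulVec c = y) :
    Matrix.fromRows ((R * Rᵀ)⁻¹ * R) Θᵀ * (Eᵀ * Eow) * Matrix.fromCols Rᵀ Θ =
      Matrix.fromBlocks (ETᵀ * Eow * Rᵀ) (ETᵀ * Eow * Θ) 0 0 := by
  have hU : IsUnit (R * Rᵀ) := aux_isUnit_RRT N L hN hNL E ET R hER Θ hΘspan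
  have hinv : (R * Rᵀ)⁻¹ * (R * Rᵀ) = 1 :=
    Matrix.nonsing_inv_mul _ ((Matrix.isUnit_iff_isUnit_det _).mp hU)
  have hET : Eᵀ = Rᵀ * ETᵀ := by rw [hER, Matrix.transpose_mul]
  have hΘE : Θᵀ * Eᵀ = 0 := by
    have := congrArg Matrix.transpose hΘflow
    simpa [Matrix.transpose_mul] using this
  have htop : (R * Rᵀ)⁻¹ * R * (Eᵀ * Eow) = ETᵀ * Eow := by
    rw [hET, show (R * Rᵀ)⁻¹ * R * (Rᵀ * ETᵀ * Eow) = ((R * Rᵀ)⁻¹ * (R * Rᵀ)) * (ETᵀ * Eow) by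
      simp [Matrix.mul_assoc], hinv, Matrix.one_mul]
  have hbot : Θᵀ * (Eᵀ * Eow) = 0 := by
    rw [← Matrix.mul_assoc, hΘE, Matrix.zero_mul]
  rw [Matrix.fromRows_mul, Matrix.fromRows_mul_fromCols, htop, hbot]
  simp
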